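/- Let κ be a complex number with Im κ > 0 and let f : ℝ → ℂ be continuous and compactly supported. Then the volume potential u(x) = −∫_ℝ Φ_κ(x,y) f(y) dy, where Φ_κ(x,y) = (i/(2κ)) e^{i κ |x−y|}, is twice continuously differentiable on ℝ and satisfies u''(x) + κ² u(x) = f(x) for every x ∈ ℝ. -/

import Mathlib

open Complex MeasureTheory

/-- For `κ` with `Im κ > 0` and `f : ℝ → ℂ` continuous with compact support, the volume
potential `u(x) = −∫ Φ_κ(x,y) f(y) dy`, `Φ_κ(x,y) = (i/(2κ)) e^{iκ|x−y|}`, is twice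
continuously differentiable and satisfies `u'' + κ²u = f` on `ℝ`. -/
theorem stmt_9 (κ : ℂ) (hκ : 0 < κ.im)
    (f : ℝ → ℂ) (hf : Continuous f) (hsupp : HasCompactSupport f)
    (Φ : ℝ → ℝ → ℂ)
    (hΦ : ∀ x y : ℝ, Φ x y = Complex.I / (2 * κ) * Complex.exp (Complex.I * κ * (|x - y| : ℝ)))
    (u : ℝ → ℂ) (hu : ∀ x : ℝ, u x = -∫ y : ℝ, Φ x y * f y) :
    ContDiff ℝ 2 u ∧ ∀ x : ℝ, deriv (deriv u) x + κ ^ 2 * u x = f x := by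
  have hκ0 : κ ≠ 0 := by intro h0; rw [h0] at hκ; simp at hκ
  set c : ℂ := Complex.I / (2 * κ) with hc
  set g : ℝ → ℂ := fun y => Complex.exp (-(Complex.I * κ * y)) * f y with hg
  set h : ℝ → ℂ := fun y => Complex.exp (Complex.I * κ * y) * f y with hh
  have hgc : Continuous g := (Complex.continuous_exp.comp (by continuity)).mul hf
  have hhc : Continuous h := (Complex.continuous_exp.comp (by continuity)).mul hf
  have hgs : HasCompactSupport g := hsupp.mul_left
  have hhs : HasCompactSupport h := hsupp.mul_left
  have hgi : Integrable g := hgc.integrable_of_hasCompactSupport hgs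
  have hhi : Integrable h := hhc.integrable_of_hasCompactSupport hhs
  set A : ℝ → ℂ := fun x => ∫ y in Set.Iic x, g y with hA
  set B : ℝ → ℂ := fun x => ∫ y in Set.Ioi x, h y with hB
  set E : ℝ → ℂ := fun x => Complex.exp (Complex.I * κ * x) with hE
  set F : ℝ → ℂ := fun x => Complex.exp (-(Complex.I * κ * x)) with hF
  -- the splitting of u
  have huV : ∀ x : ℝ, u x = -(c * (E x * A x) + c * (F x * B x)) := by
    intro x
    rw [hu x, neg_inj]
    have hψc : Continuous (fun y : ℝ => c * Complex.exp (Complex.I * κ * (|x - y| : ℝ))) := by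
      apply continuous_const.mul
      exact Complex.continuous_exp.comp (by continuity)
    have hψi : Integrable (fun y : ℝ => c * Complex.exp (Complex.I * κ * (|x - y| : ℝ)) * f y) :=
      (hψc.mul hf).integrable_of_hasCompactSupport hsupp.mul_left
    simp_rw [hΦ]
    rw [← intervalIntegral.integral_Iic_add_Ioi hψi.integrableOn hψi.integrableOn]
    congr 1
    · have h1 : ∫ y in Set.Iic x, c * Complex.exp (Complex.I * κ * (|x - y| : ℝ)) * f y
          = ∫ y in Set.Iic x, (c * E x) * g y := by
        refine setIntegral_congr_fun measurableSet_Iic fun y hy => ?_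
        rw [show |x - y| = x - y from abs_of_nonneg (sub_nonneg.2 hy)]
        have : Complex.I * κ * ((x - y : ℝ) : ℂ)
            = Complex.I * κ * x + -(Complex.I * κ * y) := by push_cast; ring
        rw [this, Complex.exp_add, hg, hE]
        ring
      rw [h1, integral_const_mul, mul_assoc]
    · have h1 : ∫ y in Set.Ioi x, c * Complex.exp (Complex.I * κ * (|x - y| : ℝ)) * f y
          = ∫ y in Set.Ioi x, (c * F x) * h y := by
        refine setIntegral_congr_fun measurableSet_Ioi fun y hy => ?_
        rw [show |x - y| = -(x - y) from abs_of_nonpos (sub_nonpos.2 hy.le)]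
        have : Complex.I * κ * ((-(x - y) : ℝ) : ℂ)
            = -(Complex.I * κ * x) + Complex.I * κ * y := by push_cast; ring
        rw [this, Complex.exp_add, hh, hF]
        ring
      rw [h1, integral_const_mul, mul_assoc]
  -- derivatives of A and B
  have hAd : ∀ x : ℝ, HasDerivAt A (g x) x := by
    intro x
    have key := (intervalIntegral.integral_hasDerivAt_right (a := 0) (b := x)
      hgi.intervalIntegrable (hgc.stronglyMeasurableAtFilter volume (nhds x))
      hgc.continuousAt).const_add (∫ y in Set.Iic (0:ℝ), g y)
    have hAe : A = fun t => (∫ y in Set.Iic (0:ℝ), g y) + ∫ s in (0:ℝ)..t, g s := by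
      funext t
      rw [← intervalIntegral.integral_Iic_sub_Iic hgi.integrableOn hgi.integrableOn]
      show (∫ y in Set.Iic t, g y) = _
      ring
    rw [hAe]; exact key
  have hBd : ∀ x : ℝ, HasDerivAt B (-(h x)) x := by
    intro x
    have key := ((intervalIntegral.integral_hasDerivAt_right (a := 0) (b := x)
      hhi.intervalIntegrable (hhc.stronglyMeasurableAtFilter volume (nhds x))
      hhc.continuousAt).const_add (∫ y in Set.Iic (0:ℝ), h y)).const_sub (∫ y : ℝ, h y)
    have hBe : B = fun t => (∫ y : ℝ, h y)
        - ((∫ y in Set.Iic (0:ℝ), h y) + ∫ s in (0:ℝ)..t, h s) := by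
      funext t
      have h2 : (∫ y in Set.Iic t, h y) + (∫ y in Set.Ioi t, h y) = ∫ y : ℝ, h y :=
        intervalIntegral.integral_Iic_add_Ioi hhi.integrableOn hhi.integrableOn
      rw [← intervalIntegral.integral_Iic_sub_Iic hhi.integrableOn hhi.integrableOn]
      show (∫ y in Set.Ioi t, h y) = _
      linear_combination h2
    rw [hBe]; exact key
  -- derivatives of E and F
  have hEd : ∀ x : ℝ, HasDerivAt E (Complex.I * κ * E x) x := by
    intro x
    have h1 : HasDerivAt (fun t : ℝ => Complex.I * κ * (t : ℂ)) (Complex.I * κ) x := by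
      simpa using ((hasDerivAt_id x).ofReal_comp.const_mul (Complex.I * κ))
    simpa [hE, mul_comm] using h1.cexp
  have hFd : ∀ x : ℝ, HasDerivAt F (-(Complex.I * κ) * F x) x := by
    intro x
    have h1 : HasDerivAt (fun t : ℝ => -(Complex.I * κ * (t : ℂ))) (-(Complex.I * κ)) x := by
      simpa using ((hasDerivAt_id x).ofReal_comp.const_mul (Complex.I * κ)).fun_neg
    simpa [hF, mul_comm] using h1.cexp
  -- pointwise identities
  have e1 : ∀ x : ℝ, E x * g x = f x := by
    intro x
    rw [hE, hg, ← mul_assoc, ← Complex.exp_add, add_neg_cancel, Complex.exp_zero, one_mul]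
  have e2 : ∀ x : ℝ, F x * h x = f x := by
    intro x
    rw [hF, hh, ← mul_assoc, ← Complex.exp_add, neg_add_cancel, Complex.exp_zero, one_mul]
  have e3 : 2 * κ * c = Complex.I := by rw [hc]; field_simp
  have sq : Complex.I ^ 2 = -1 := Complex.I_sq
  -- first derivative
  set w : ℝ → ℂ := fun x => -(c * (Complex.I * κ)) * (E x * A x - F x * B x) with hw
  have hu1 : ∀ x : ℝ, HasDerivAt u (w x) x := by
    intro x
    have H := ((((hEd x).fun_mul (hAd x)).const_mul c).fun_add
      (((hFd x).fun_mul (hBd x)).const_mul c)).fun_neg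
    have hUu : u = fun x => -(c * (E x * A x) + c * (F x * B x)) := funext huV
    rw [hUu, hw]
    convert H using 1
    · rfl
    linear_combination c * e1 x - c * e2 x
  -- second derivative
  have hu2 : ∀ x : ℝ, HasDerivAt w (-(κ ^ 2) * u x + f x) x := by
    intro x
    have H := (((hEd x).fun_mul (hAd x)).fun_sub ((hFd x).fun_mul (hBd x))).const_mul
      (-(c * (Complex.I * κ)))
    rw [hw]
    convert H using 1
    · rfl
    rw [huV x]
    linear_combination (c * Complex.I * κ) * e1 x + (c * Complex.I * κ) * e2 x
      + Complex.I * (f x) * e3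
      + (c * κ ^ 2 * (E x * A x + F x * B x) + f x) * sq
  have hderiv1 : deriv u = w := funext fun x => (hu1 x).deriv
  have hud : Differentiable ℝ u := fun x => (hu1 x).differentiableAt
  have hwd : Differentiable ℝ w := fun x => (hu2 x).differentiableAt
  have hderiv2 : deriv w = fun x => -(κ ^ 2) * u x + f x := funext fun x => (hu2 x).deriv
  constructor
  · have h2 : (2 : WithTop ℕ∞) = 1 + 1 := by norm_num
    rw [h2, contDiff_succ_iff_deriv]
    refine ⟨hud, by simp, ?_⟩
    rw [hderiv1, contDiff_one_iff_deriv]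
    refine ⟨hwd, ?_⟩
    rw [hderiv2]
    exact (continuous_const.mul hud.continuous).add hf
  · intro x
    rw [hderiv1, hderiv2]
    ring
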